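/- arXiv:2510.03672 — 2 statements merged into one kernel-verified Lean document; each statement's English description precedes it below -/
import Mathlib

section
/- For every integer n ≥ 1, S(n) ≥ (τ(n)²/4) · log n, where S(n) := ∑_{i=1}^{τ(n)} (i − 1) · log d_i and 1 = d_1 < d_2 < ⋯ < d_{τ(n)} = n are the positive divisors of n in increasing order. -/
open Finset
open scoped Classical

noncomputable section

/-- Number of positive divisors of `n`. -/
def tau (n : ℕ) : ℕ := n.divisors.card

/-- The positive divisors of `n` in increasing order. -/
def sortedDivisors (n : ℕ) : List ℕ := n.divisors.sort (· ≤ ·)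

/-- The `i`-th divisor of `n` (1-based): `dvs n 1 = 1`, ..., `dvs n (tau n) = n`. -/
def dvs (n i : ℕ) : ℕ := (sortedDivisors n).getD (i - 1) 0

/-- `S(n) = ∑_{i=1}^{τ(n)} (i-1) log d_i`. -/
noncomputable def Sfun (n : ℕ) : ℝ :=
  ∑ i ∈ Finset.Icc 1 (tau n), ((i : ℝ) - 1) * Real.log (dvs n i)

/-- `V(n) = ∏_{1 ≤ i < j ≤ τ(n)} (d_j - d_i)`. -/
noncomputable def Vfun (n : ℕ) : ℝ :=
  ∏ j ∈ Finset.Icc 1 (tau n), ∏ i ∈ Finset.Ico 1 j, ((dvs n j : ℝ) - (dvs n i : ℝ))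

/-- `Ω₂(n) = ∑_{p^α ∥ n} α²`. -/
def Omega2 (n : ℕ) : ℕ := ∑ p ∈ n.primeFactors, (n.factorization p) ^ 2

lemma length_sorted (n : ℕ) : (sortedDivisors n).length = tau n :=
  Finset.length_sort _

lemma sorted_le (n : ℕ) : (sortedDivisors n).Pairwise (· ≤ ·) :=
  Finset.pairwise_sort _ _

lemma dvs_eq_get (n : ℕ) {i : ℕ} (h1 : 1 ≤ i) (h2 : i ≤ tau n) :
    dvs n i = (sortedDivisors n)[i - 1]'(by rw [length_sorted]; omega) := by
  apply List.getD_eq_getElem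

lemma dvs_mem (n : ℕ) {i : ℕ} (h1 : 1 ≤ i) (h2 : i ≤ tau n) :
    dvs n i ∈ n.divisors := by
  rw [dvs_eq_get n h1 h2, ← Finset.mem_sort (α := ℕ) (· ≤ ·)]
  exact List.getElem_mem _

lemma dvs_pos (n : ℕ) {i : ℕ} (h1 : 1 ≤ i) (h2 : i ≤ tau n) : 0 < dvs n i :=
  Nat.pos_of_mem_divisors (dvs_mem n h1 h2)

lemma dvs_dvd (n : ℕ) {i : ℕ} (h1 : 1 ≤ i) (h2 : i ≤ tau n) : dvs n i ∣ n :=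
  (Nat.mem_divisors.mp (dvs_mem n h1 h2)).1

lemma dvs_mono (n : ℕ) {i j : ℕ} (h1 : 1 ≤ i) (hij : i ≤ j) (h2 : j ≤ tau n) :
    dvs n i ≤ dvs n j := by
  rcases eq_or_lt_of_le hij with rfl | hlt
  · exact le_rfl
  · rw [dvs_eq_get n h1 (le_trans hij h2), dvs_eq_get n (le_trans h1 hij) h2]
    exact List.pairwise_iff_getElem.mp (sorted_le n) _ _ _ _ (by omega)

lemma map_div_eq_reverse (n : ℕ) (hn : 1 ≤ n) :
    (sortedDivisors n).map (n / ·) = (sortedDivisors n).reverse := by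
  have hmem : ∀ d ∈ sortedDivisors n, d ∈ n.divisors := fun d hd =>
    (Finset.mem_sort (α := ℕ) (· ≤ ·)).mp hd
  have hinj : ∀ d ∈ n.divisors, n / (n / d) = d := by
    intro d hd
    exact Nat.div_div_self (Nat.mem_divisors.mp hd).1 (by omega)
  have himg : Multiset.map (n / ·) n.divisors.val = n.divisors.val := by
    have hinjOn : Set.InjOn (n / ·) ↑n.divisors := by
      intro a ha b hb hab
      simp only [Finset.coe_mem, Finset.mem_coe] at ha hb
      rw [← hinj a ha, ← hinj b hb]
      exact congrArg _ hab
    rw [← Finset.image_val_of_injOn hinjOn]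
    exact congrArg Finset.val (Nat.image_div_divisors_eq_divisors n)
  apply (fun hp h1 h2 => List.Perm.eq_of_pairwise (le := fun a b : ℕ => b ≤ a)
    (fun a b _ _ h h' => le_antisymm h' h) h1 h2 hp)
  · rw [← Multiset.coe_eq_coe]
    show (Multiset.map (n / ·) ↑(sortedDivisors n)) = _
    rw [Multiset.coe_reverse]
    show _ = (↑(sortedDivisors n) : Multiset ℕ)
    rw [show ((sortedDivisors n : Multiset ℕ)) = n.divisors.val from Finset.sort_eq _ _]
    exact himg
  · rw [List.pairwise_map]
    apply List.Pairwise.imp_of_mem (l := sortedDivisors n)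
      (R := fun a b => a ≤ b)
    · intro a b ha hb hab
      exact Nat.div_le_div_left hab (Nat.pos_of_mem_divisors (hmem a ha))
    · exact sorted_le n
  · rw [List.pairwise_reverse]
    exact sorted_le n

lemma dvs_pair (n : ℕ) (hn : 1 ≤ n) {i : ℕ} (h1 : 1 ≤ i) (h2 : i ≤ tau n) :
    dvs n (tau n + 1 - i) = n / dvs n i := by
  have hlen := length_sorted n
  have key := congrArg (fun l : List ℕ => l.getD (i - 1) 0) (map_div_eq_reverse n hn)
  have hi : i - 1 < (sortedDivisors n).length := by omega
  have hi' : i - 1 < ((sortedDivisors n).map (n / ·)).length := by simpa using hi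
  have hi'' : i - 1 < (sortedDivisors n).reverse.length := by simpa using hi
  rw [List.getD_eq_getElem _ _ hi', List.getD_eq_getElem _ _ hi'',
    List.getElem_map, List.getElem_reverse] at key
  rw [dvs_eq_get n (i := tau n + 1 - i) (by omega) (by omega), dvs_eq_get n h1 h2]
  simp only [show tau n + 1 - i - 1 = (sortedDivisors n).length - 1 - (i - 1) from by omega]
  exact key.symm

lemma tau_pos (n : ℕ) (hn : 1 ≤ n) : 1 ≤ tau n := by
  have : n ∈ n.divisors := Nat.mem_divisors_self n (by omega)
  exact Finset.card_pos.mpr ⟨n, this⟩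

lemma dvs_last (n : ℕ) (hn : 1 ≤ n) : dvs n (tau n) = n := by
  have h1 : dvs n (tau n) ∣ n := dvs_dvd n (tau_pos n hn) le_rfl
  have hmem : n ∈ sortedDivisors n :=
    (Finset.mem_sort (α := ℕ) (· ≤ ·)).mpr (Nat.mem_divisors_self n (by omega))
  obtain ⟨k, hk, hkn⟩ := List.getElem_of_mem hmem
  have hlen := length_sorted n
  have : dvs n (k + 1) = n := by
    rw [dvs_eq_get n (i := k + 1) (by omega) (by omega)]; simpa using hkn
  have hle : n ≤ dvs n (tau n) :=
    calc n = dvs n (k + 1) := this.symm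
    _ ≤ dvs n (tau n) := dvs_mono n (i := k + 1) (j := tau n) (by omega) (by omega) le_rfl
  exact le_antisymm (Nat.le_of_dvd (by omega) h1) hle

lemma log_dvs_pair (n : ℕ) (hn : 1 ≤ n) {i : ℕ} (h1 : 1 ≤ i) (h2 : i ≤ tau n) :
    Real.log (dvs n (tau n + 1 - i)) = Real.log n - Real.log (dvs n i) := by
  have hd := dvs_dvd n h1 h2
  have hpos := dvs_pos n h1 h2
  have hmul : dvs n i * dvs n (tau n + 1 - i) = n := by
    rw [dvs_pair n hn h1 h2]
    exact Nat.mul_div_cancel' hd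
  have hpos2 := dvs_pos n (i := tau n + 1 - i) (by omega) (by omega)
  rw [eq_sub_iff_add_eq, ← Real.log_mul (by exact_mod_cast hpos2.ne') (by exact_mod_cast hpos.ne'),
    mul_comm, ← Nat.cast_mul, hmul]

theorem S_lower (n : ℕ) (hn : 1 ≤ n) :
    (tau n : ℝ) ^ 2 / 4 * Real.log n ≤ Sfun n := by
  by_cases h1 : n = 1
  · subst h1
    have : tau 1 = 1 := by simp [tau]
    simp [Sfun, this, Real.log_one]
  have hn2 : 2 ≤ n := by omega
  set t := tau n with ht
  set L := Real.log n with hL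
  have hL0 : 0 ≤ L := Real.log_nonneg (by exact_mod_cast hn)
  have ht2 : 2 ≤ t := by
    apply Finset.one_lt_card.mpr
    exact ⟨1, Nat.one_mem_divisors.mpr (by omega), n,
      Nat.mem_divisors_self n (by omega), by omega⟩
  set a : ℕ → ℝ := fun i => Real.log (dvs n i) with haa
  -- half bounds
  have hup : ∀ i, 1 ≤ i → i ≤ t → t + 1 ≤ 2 * i → L / 2 ≤ a i := by
    intro i hi1 hi2 hi3
    have hmono : dvs n (t + 1 - i) ≤ dvs n i := dvs_mono n (by omega) (by omega) hi2
    have hmul : dvs n i * dvs n (t + 1 - i) = n := by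
      rw [dvs_pair n hn hi1 hi2]
      exact Nat.mul_div_cancel' (dvs_dvd n hi1 hi2)
    have hnle : n ≤ dvs n i * dvs n i := by
      calc n = dvs n i * dvs n (t + 1 - i) := hmul.symm
      _ ≤ dvs n i * dvs n i := Nat.mul_le_mul_left _ hmono
    have hpos := dvs_pos n hi1 hi2
    have := Real.log_le_log (by positivity) (show (n : ℝ) ≤ (dvs n i : ℝ) * dvs n i by exact_mod_cast hnle)
    rw [Real.log_mul (by exact_mod_cast hpos.ne') (by exact_mod_cast hpos.ne')] at this
    simp only [haa]
    linarith
  have hdown : ∀ i, 1 ≤ i → i ≤ t → 2 * i ≤ t + 1 → a i ≤ L / 2 := by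
    intro i hi1 hi2 hi3
    have hmono : dvs n i ≤ dvs n (t + 1 - i) := dvs_mono n hi1 (by omega) (by omega)
    have hmul : dvs n i * dvs n (t + 1 - i) = n := by
      rw [dvs_pair n hn hi1 hi2]
      exact Nat.mul_div_cancel' (dvs_dvd n hi1 hi2)
    have hnle : dvs n i * dvs n i ≤ n := by
      calc dvs n i * dvs n i ≤ dvs n i * dvs n (t + 1 - i) := Nat.mul_le_mul_left _ hmono
      _ = n := hmul
    have hpos := dvs_pos n hi1 hi2
    have := Real.log_le_log (by positivity) (show ((dvs n i : ℝ) * dvs n i) ≤ (n : ℝ) by exact_mod_cast hnle)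
    rw [Real.log_mul (by exact_mod_cast hpos.ne') (by exact_mod_cast hpos.ne')] at this
    simp only [haa]
    linarith
  -- reflected sum
  have hrefl : Sfun n = ∑ i ∈ Finset.Icc 1 t, ((t : ℝ) - i) * (L - a i) := by
    rw [Sfun]
    apply Finset.sum_nbij' (i := fun i => t + 1 - i) (j := fun i => t + 1 - i)
    · intro i hi
      simp only [Finset.mem_Icc] at hi ⊢
      omega
    · intro i hi
      simp only [Finset.mem_Icc] at hi ⊢
      omega
    · intro i hi
      simp only [Finset.mem_Icc] at hi
      omega
    · intro i hi
      simp only [Finset.mem_Icc] at hi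
      omega
    · intro i hi
      simp only [Finset.mem_Icc] at hi
      have hlog : a (t + 1 - i) = L - a i := log_dvs_pair n hn hi.1 hi.2
      have hcast : ((t + 1 - i : ℕ) : ℝ) = (t : ℝ) + 1 - i := by
        push_cast [Nat.cast_sub (by omega : i ≤ t + 1)]
        ring
      show ((i : ℝ) - 1) * a i = ((t : ℝ) - ((t + 1 - i : ℕ) : ℝ)) * (L - a (t + 1 - i))
      rw [hlog, hcast]
      ring
  -- per-term function and bound
  set T : ℕ → ℝ := fun i => ((i : ℝ) - 1) * a i + ((t : ℝ) - i) * (L - a i) with hT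
  have htwoS : 2 * Sfun n = ∑ i ∈ Finset.Icc 1 t, T i := by
    rw [two_mul]
    nth_rewrite 2 [hrefl]
    rw [Sfun, ← Finset.sum_add_distrib]
  have hterm : ∀ i ∈ Finset.Icc 1 t, ((t : ℝ) - 1) * L / 2 ≤ T i := by
    intro i hi
    simp only [Finset.mem_Icc] at hi
    have hTeq : T i = ((t : ℝ) - i) * L + (2 * (i : ℝ) - 1 - t) * a i := by
      simp only [hT]; ring
    rcases le_or_gt (t + 1) (2 * i) with hc | hc
    · have hai := hup i hi.1 hi.2 hc
      have hc' : (0 : ℝ) ≤ 2 * (i : ℝ) - 1 - t := by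
        have : (t : ℝ) + 1 ≤ 2 * i := by exact_mod_cast hc
        linarith
      have := mul_le_mul_of_nonneg_left hai hc'
      rw [hTeq]
      have hii : (i : ℝ) ≤ t := by exact_mod_cast hi.2
      nlinarith
    · have hai := hdown i hi.1 hi.2 (by omega)
      have hc' : 2 * (i : ℝ) - 1 - t ≤ 0 := by
        have : 2 * (i : ℝ) ≤ (t : ℝ) + 1 := by exact_mod_cast (by omega : 2 * i ≤ t + 1)
        linarith
      have := mul_le_mul_of_nonpos_left hai hc'
      rw [hTeq]
      have hii : (1 : ℝ) ≤ i := by exact_mod_cast hi.1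
      nlinarith
  -- endpoints
  have hat : a t = L := by simp only [haa, hL, ht, dvs_last n hn]
  have ha1 : a 1 = 0 := by
    have h := log_dvs_pair n hn (i := t) (tau_pos n hn) le_rfl
    rw [show t + 1 - t = 1 from by omega] at h
    have h2 : a 1 = L - a t := h
    rw [h2, hat]; ring
  have hT1 : T 1 = ((t : ℝ) - 1) * L := by
    simp only [hT, ha1]
    push_cast
    ring
  have hTt : T t = ((t : ℝ) - 1) * L := by
    simp only [hT, hat]
    ring
  -- split sum
  have h1mem : (1 : ℕ) ∈ Finset.Icc 1 t := by simp; omega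
  have htmem : t ∈ (Finset.Icc 1 t).erase 1 := by
    simp [Finset.mem_erase]
    omega
  have hsplit : ∑ i ∈ Finset.Icc 1 t, T i
      = T 1 + (T t + ∑ i ∈ ((Finset.Icc 1 t).erase 1).erase t, T i) := by
    rw [Finset.add_sum_erase _ T htmem, Finset.add_sum_erase _ T h1mem]
  have hcard : (((Finset.Icc 1 t).erase 1).erase t).card = t - 2 := by
    rw [Finset.card_erase_of_mem htmem, Finset.card_erase_of_mem h1mem, Nat.card_Icc]
    omega
  have hrest : ((t : ℝ) - 2) * (((t : ℝ) - 1) * L / 2)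
      ≤ ∑ i ∈ ((Finset.Icc 1 t).erase 1).erase t, T i := by
    have := Finset.card_nsmul_le_sum (((Finset.Icc 1 t).erase 1).erase t) T
      (((t : ℝ) - 1) * L / 2) (fun i hi => hterm i (Finset.mem_of_mem_erase (Finset.mem_of_mem_erase hi)))
    rw [hcard] at this
    have hc2 : ((t - 2 : ℕ) : ℝ) = (t : ℝ) - 2 := by
      push_cast [Nat.cast_sub ht2]
      ring
    rwa [nsmul_eq_mul, hc2] at this
  have htR : (2 : ℝ) ≤ (t : ℝ) := by exact_mod_cast ht2
  have hfinal : (t : ℝ) ^ 2 / 2 * L ≤ 2 * Sfun n := by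
    rw [htwoS, hsplit, hT1, hTt]
    nlinarith [mul_nonneg (sub_nonneg.mpr htR) hL0]
  linarith
end
end

section
/- For every ε > 0 and every integer n ≥ 2 such that every prime power p^α exactly dividing n satisfies log(p^α) ≤ 4ε³ · log n, the number of positive divisors d of n with |log d − (log n)/2| < ε · log n is at least (1 − ε) · τ(n). -/
open Finset
open scoped Classical

noncomputable section

noncomputable def gfun (n : ℕ) : ℝ :=
  ∑ d ∈ n.divisors, (Real.log d - Real.log n / 2) ^ 2

noncomputable def Wfun (n : ℕ) : ℝ :=
  ∑ p ∈ n.primeFactors,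
    ((∑ b ∈ Finset.range (n.factorization p + 1),
        ((b : ℝ) - (n.factorization p : ℝ) / 2) ^ 2) / ((n.factorization p : ℝ) + 1))
      * Real.log p ^ 2


/-- gcd key lemma -/
lemma gcd_key {a b x y : ℕ} (hab : Nat.Coprime a b) (hx : x ∣ a) (hy : y ∣ b) :
    Nat.gcd (x * y) a = x := by
  apply Nat.dvd_antisymm
  · have hga : Nat.gcd (x * y) a ∣ a := Nat.gcd_dvd_right _ _
    have hgb : Nat.Coprime (Nat.gcd (x * y) a) b := Nat.Coprime.coprime_dvd_left hga hab
    have hgy : Nat.Coprime (Nat.gcd (x * y) a) y := Nat.Coprime.coprime_dvd_right hy hgb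
    exact hgy.dvd_of_dvd_mul_right (Nat.gcd_dvd_left _ _)
  · exact Nat.dvd_gcd (dvd_mul_right x y) hx

lemma sum_divisors_coprime_mul {a b : ℕ} (ha : a ≠ 0) (hb : b ≠ 0) (hab : Nat.Coprime a b)
    (f : ℕ → ℝ) :
    ∑ d ∈ (a * b).divisors, f d = ∑ x ∈ a.divisors, ∑ y ∈ b.divisors, f (x * y) := by
  rw [← Finset.sum_product']
  symm
  refine Finset.sum_nbij' (i := fun p => p.1 * p.2) (j := fun d => (Nat.gcd d a, Nat.gcd d b))
    ?_ ?_ ?_ ?_ ?_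
  · rintro ⟨x, y⟩ hm
    simp only [Finset.mem_product, Nat.mem_divisors] at hm
    exact Nat.mem_divisors.mpr ⟨mul_dvd_mul hm.1.1 hm.2.1, mul_ne_zero ha hb⟩
  · intro d hd
    simp only [Finset.mem_product, Nat.mem_divisors]
    exact ⟨⟨Nat.gcd_dvd_right _ _, ha⟩, ⟨Nat.gcd_dvd_right _ _, hb⟩⟩
  · rintro ⟨x, y⟩ hm
    simp only [Finset.mem_product, Nat.mem_divisors] at hm
    have h1 := gcd_key hab hm.1.1 hm.2.1
    have h2 : Nat.gcd (x * y) b = y := by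
      rw [mul_comm]; exact gcd_key hab.symm hm.2.1 hm.1.1
    simp [h1, h2]
  · intro d hd
    obtain ⟨hdvd, hne⟩ := Nat.mem_divisors.mp hd
    obtain ⟨x, y, hx, hy, rfl⟩ := (Nat.dvd_mul).mp hdvd
    have h1 := gcd_key hab hx hy
    have h2 : Nat.gcd (x * y) b = y := by
      rw [mul_comm]; exact gcd_key hab.symm hy hx
    simp [h1, h2]
  · intros; rfl


lemma log_add_log_div {n d : ℕ} (hn : n ≠ 0) (hd : d ∣ n) :
    Real.log d + Real.log ((n / d : ℕ) : ℝ) = Real.log n := by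
  have hd0 : d ≠ 0 := by rintro rfl; exact hn (Nat.eq_zero_of_zero_dvd hd)
  have h1 : d * (n / d) = n := Nat.mul_div_cancel' hd
  have h2 : n / d ≠ 0 := by
    intro h; rw [h, mul_zero] at h1; exact hn h1.symm
  rw [← Real.log_mul (by exact_mod_cast hd0) (by exact_mod_cast h2), ← Nat.cast_mul, h1]

lemma mean_zero {n : ℕ} (hn : n ≠ 0) :
    ∑ d ∈ n.divisors, (Real.log d - Real.log n / 2) = 0 := by
  have key : (2 : ℝ) * ∑ d ∈ n.divisors, Real.log d = (tau n : ℝ) * Real.log n := by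
    have h1 : ∑ d ∈ n.divisors, Real.log ((n / d : ℕ) : ℝ)
        = ∑ d ∈ n.divisors, Real.log d := Nat.sum_div_divisors n (fun d => Real.log d)
    calc (2 : ℝ) * ∑ d ∈ n.divisors, Real.log d
        = ∑ d ∈ n.divisors, Real.log d + ∑ d ∈ n.divisors, Real.log ((n / d : ℕ) : ℝ) := by
          rw [h1]; ring
      _ = ∑ d ∈ n.divisors, (Real.log d + Real.log ((n / d : ℕ) : ℝ)) := by
          rw [Finset.sum_add_distrib]
      _ = ∑ d ∈ n.divisors, Real.log n :=
          Finset.sum_congr rfl fun d hd => log_add_log_div hn (Nat.dvd_of_mem_divisors hd)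
      _ = (tau n : ℝ) * Real.log n := by rw [Finset.sum_const, tau, nsmul_eq_mul]
  rw [Finset.sum_sub_distrib, Finset.sum_const, nsmul_eq_mul]
  have : (n.divisors.card : ℝ) = (tau n : ℝ) := by rw [tau]
  rw [this]
  linarith




lemma tau_prime_pow {p : ℕ} (hp : p.Prime) (k : ℕ) : tau (p ^ k) = k + 1 := by
  rw [tau, Nat.divisors_prime_pow hp, Finset.card_map, Finset.card_range]

lemma gfun_prime_pow {p : ℕ} (hp : p.Prime) {k : ℕ} (hk : 0 < k) :
    gfun (p ^ k) = (tau (p ^ k) : ℝ) * Wfun (p ^ k) := by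
  have hfac : (p ^ k).factorization p = k := by
    rw [hp.factorization_pow, Finsupp.single_eq_same]
  have hpf : (p ^ k).primeFactors = {p} := by
    rw [Nat.primeFactors_prime_pow hk.ne' hp]
  rw [gfun, Nat.sum_divisors_prime_pow hp, tau_prime_pow hp, Wfun, hpf,
    Finset.sum_singleton, hfac]
  have hlog : ∀ b : ℕ, Real.log ((p ^ b : ℕ) : ℝ) = (b : ℝ) * Real.log p := by
    intro b; rw [Nat.cast_pow, Real.log_pow]
  have : ∀ b ∈ Finset.range (k + 1),
      (Real.log ((p ^ b : ℕ) : ℝ) - Real.log ((p ^ k : ℕ) : ℝ) / 2) ^ 2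
        = ((b : ℝ) - (k : ℝ) / 2) ^ 2 * Real.log p ^ 2 := by
    intro b _; rw [hlog, hlog]; ring
  rw [Finset.sum_congr rfl this, ← Finset.sum_mul]
  have hk1 : ((k : ℝ) + 1) ≠ 0 := by positivity
  field_simp
  push_cast
  rw [Finset.sum_congr rfl (fun (x : ℕ) _ => show ((x : ℝ) * 2 - k) ^ 2 / 2 ^ 2 = (2 * x - k) ^ 2 / 2 ^ 2 by ring)]
  ring








lemma Wfun_mul {a b : ℕ} (ha0 : a ≠ 0) (hb0 : b ≠ 0) (hab : Nat.Coprime a b) :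
    Wfun (a * b) = Wfun a + Wfun b := by
  rw [Wfun, Nat.primeFactors_mul ha0 hb0,
    Finset.sum_union (Nat.Coprime.disjoint_primeFactors hab)]
  congr 1
  · refine Finset.sum_congr rfl fun p hp => ?_
    have hpb : ¬ p ∣ b := fun hdvd => (Nat.prime_of_mem_primeFactors hp).one_lt.ne'
      (Nat.eq_one_of_dvd_coprimes hab (Nat.dvd_of_mem_primeFactors hp) hdvd)
    have : (a * b).factorization p = a.factorization p := by
      rw [Nat.factorization_mul ha0 hb0, Finsupp.add_apply,
        Nat.factorization_eq_zero_of_not_dvd hpb, add_zero]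
    rw [this]
  · refine Finset.sum_congr rfl fun p hp => ?_
    have hpa : ¬ p ∣ a := fun hdvd => (Nat.prime_of_mem_primeFactors hp).one_lt.ne'
      (Nat.eq_one_of_dvd_coprimes hab hdvd (Nat.dvd_of_mem_primeFactors hp))
    have : (a * b).factorization p = b.factorization p := by
      rw [Nat.factorization_mul ha0 hb0, Finsupp.add_apply,
        Nat.factorization_eq_zero_of_not_dvd hpa, zero_add]
    rw [this]

lemma gfun_mul {a b : ℕ} (ha0 : a ≠ 0) (hb0 : b ≠ 0) (hab : Nat.Coprime a b) :
    gfun (a * b) = (tau b : ℝ) * gfun a + (tau a : ℝ) * gfun b := by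
  have hlab : Real.log ((a * b : ℕ) : ℝ) = Real.log a + Real.log b := by
    push_cast
    exact Real.log_mul (Nat.cast_ne_zero.mpr ha0) (Nat.cast_ne_zero.mpr hb0)
  rw [gfun, sum_divisors_coprime_mul ha0 hb0 hab]
  have step : ∀ x ∈ a.divisors, ∀ y ∈ b.divisors,
      (Real.log ((x * y : ℕ) : ℝ) - Real.log ((a * b : ℕ) : ℝ) / 2) ^ 2
      = (Real.log x - Real.log a / 2) ^ 2
        + (2 * (Real.log x - Real.log a / 2)) * (Real.log y - Real.log b / 2)
        + (Real.log y - Real.log b / 2) ^ 2 := by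
    intro x hx y hy
    have hx0 : (x : ℝ) ≠ 0 := Nat.cast_ne_zero.mpr (Nat.pos_of_mem_divisors hx).ne'
    have hy0 : (y : ℝ) ≠ 0 := Nat.cast_ne_zero.mpr (Nat.pos_of_mem_divisors hy).ne'
    have hlxy : Real.log ((x * y : ℕ) : ℝ) = Real.log x + Real.log y := by
      push_cast; exact Real.log_mul hx0 hy0
    rw [hlxy, hlab]; ring
  have inner : ∀ x ∈ a.divisors,
      ∑ y ∈ b.divisors, (Real.log ((x * y : ℕ) : ℝ) - Real.log ((a * b : ℕ) : ℝ) / 2) ^ 2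
      = (tau b : ℝ) * (Real.log x - Real.log a / 2) ^ 2 + gfun b := by
    intro x hx
    rw [Finset.sum_congr rfl (step x hx), Finset.sum_add_distrib, Finset.sum_add_distrib,
      Finset.sum_const, ← Finset.mul_sum, mean_zero hb0, mul_zero, add_zero,
      nsmul_eq_mul, gfun, tau]
  rw [Finset.sum_congr rfl inner, Finset.sum_add_distrib, Finset.sum_const, ← Finset.mul_sum,
    nsmul_eq_mul]
  simp only [gfun, tau]

lemma gfun_eq (n : ℕ) : n ≠ 0 → gfun n = (tau n : ℝ) * Wfun n := by
  induction n using Nat.recOnPosPrimePosCoprime with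
  | prime_pow p k hp hk => exact fun _ => gfun_prime_pow hp hk
  | zero => exact fun h => absurd rfl h
  | one => intro _; simp [gfun, Wfun, tau]
  | coprime a b ha hb hab iha ihb =>
    intro _
    have ha0 : a ≠ 0 := by omega
    have hb0 : b ≠ 0 := by omega
    rw [gfun_mul ha0 hb0 hab, iha ha0, ihb hb0, Wfun_mul ha0 hb0 hab]
    have htau : (tau (a * b) : ℝ) = (tau a : ℝ) * (tau b : ℝ) := by
      rw [tau, tau, tau]; exact_mod_cast Nat.Coprime.card_divisors_mul hab
    rw [htau]; ring














lemma sum_factorization_log (n : ℕ) (hn : n ≠ 0) :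
    ∑ p ∈ n.primeFactors, (n.factorization p : ℝ) * Real.log p = Real.log n := by
  have hprod : ∏ p ∈ n.primeFactors, p ^ n.factorization p = n := by
    rw [← Nat.support_factorization]
    exact Nat.factorization_prod_pow_eq_self hn
  conv_rhs => rw [← hprod]
  rw [Nat.cast_prod, Real.log_prod]
  · refine Finset.sum_congr rfl fun p hp => ?_
    rw [Nat.cast_pow, Real.log_pow]
  · intro p hp
    have := (Nat.prime_of_mem_primeFactors hp).pos
    positivity


theorem count_central_divisors (ε : ℝ) (hε : 0 < ε) (n : ℕ) (hn : 2 ≤ n)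
    (h : ∀ p ∈ n.primeFactors, Real.log (p ^ n.factorization p) ≤ 4 * ε ^ 3 * Real.log n) :
    (1 - ε) * (tau n : ℝ)
      ≤ ((n.divisors.filter (fun d => |Real.log d - Real.log n / 2| < ε * Real.log n)).card : ℝ) := by
  have hn0 : n ≠ 0 := by omega
  set L : ℝ := Real.log n with hLdef
  have hL : 0 < L := Real.log_pos (by exact_mod_cast hn)
  -- Bound Wfun
  have hW : Wfun n ≤ ε ^ 3 * L ^ 2 := by
    have hterm : ∀ p ∈ n.primeFactors,
        ((∑ b ∈ Finset.range (n.factorization p + 1),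
            ((b : ℝ) - (n.factorization p : ℝ) / 2) ^ 2) / ((n.factorization p : ℝ) + 1))
          * Real.log p ^ 2
        ≤ ((n.factorization p : ℝ) * Real.log p) * (ε ^ 3 * L) := by
      intro p hp
      set α : ℕ := n.factorization p with hα
      have hp2 : 2 ≤ p := (Nat.prime_of_mem_primeFactors hp).two_le
      have hp1 : 1 ≤ p := by omega
      have hlogp : 0 ≤ Real.log p := Real.log_nonneg (by exact_mod_cast hp1)
      have hsum : (∑ b ∈ Finset.range (α + 1), ((b : ℝ) - (α : ℝ) / 2) ^ 2)
          ≤ ((α : ℝ) + 1) * ((α : ℝ) / 2) ^ 2 := by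
        calc (∑ b ∈ Finset.range (α + 1), ((b : ℝ) - (α : ℝ) / 2) ^ 2)
            ≤ ∑ b ∈ Finset.range (α + 1), ((α : ℝ) / 2) ^ 2 := by
              refine Finset.sum_le_sum fun b hb => ?_
              have hb' : (b : ℝ) ≤ (α : ℝ) := by
                exact_mod_cast Nat.lt_succ_iff.mp (Finset.mem_range.mp hb)
              have hb0 : (0 : ℝ) ≤ (b : ℝ) := Nat.cast_nonneg b
              apply sq_le_sq' <;> linarith
          _ = ((α : ℝ) + 1) * ((α : ℝ) / 2) ^ 2 := by
              rw [Finset.sum_const, Finset.card_range]; push_cast; ring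
      have hα1 : (0 : ℝ) < (α : ℝ) + 1 := by positivity
      have h1 : ((∑ b ∈ Finset.range (α + 1), ((b : ℝ) - (α : ℝ) / 2) ^ 2) / ((α : ℝ) + 1))
          * Real.log p ^ 2 ≤ ((α : ℝ) * Real.log p) ^ 2 / 4 := by
        rw [div_mul_eq_mul_div, div_le_div_iff₀ hα1 (by norm_num)]
        have hsq : (0 : ℝ) ≤ Real.log p ^ 2 := sq_nonneg _
        nlinarith [mul_le_mul_of_nonneg_right hsum hsq]
      have hh := h p hp
      rw [Real.log_pow] at hh
      have hαlog : 0 ≤ (α : ℝ) * Real.log p := by positivity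
      have h2 : ((α : ℝ) * Real.log p) ^ 2 / 4 ≤ ((α : ℝ) * Real.log p) * (ε ^ 3 * L) := by
        nlinarith
      linarith
    calc Wfun n ≤ ∑ p ∈ n.primeFactors, ((n.factorization p : ℝ) * Real.log p) * (ε ^ 3 * L) :=
          Finset.sum_le_sum hterm
      _ = (∑ p ∈ n.primeFactors, (n.factorization p : ℝ) * Real.log p) * (ε ^ 3 * L) := by
          rw [← Finset.sum_mul]
      _ = ε ^ 3 * L ^ 2 := by rw [sum_factorization_log n hn0]; ring
  have hg : gfun n ≤ (tau n : ℝ) * (ε ^ 3 * L ^ 2) := by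
    rw [gfun_eq n hn0]
    exact mul_le_mul_of_nonneg_left hW (Nat.cast_nonneg _)
  -- Chebyshev
  set Bad := n.divisors.filter (fun d : ℕ => ¬ |Real.log d - L / 2| < ε * L) with hBadDef
  have hBadcard : (Bad.card : ℝ) ≤ ε * (tau n : ℝ) := by
    have h1 : (Bad.card : ℝ) * (ε * L) ^ 2 ≤ gfun n := by
      calc (Bad.card : ℝ) * (ε * L) ^ 2 = ∑ _d ∈ Bad, (ε * L) ^ 2 := by
            rw [Finset.sum_const, nsmul_eq_mul]
        _ ≤ ∑ d ∈ Bad, (Real.log d - L / 2) ^ 2 := by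
            refine Finset.sum_le_sum fun d hd => ?_
            have hd' := (Finset.mem_filter.mp hd).2
            push_neg at hd'
            calc (ε * L) ^ 2 ≤ |Real.log d - L / 2| ^ 2 := by
                  apply pow_le_pow_left₀ (by positivity) hd'
              _ = (Real.log d - L / 2) ^ 2 := sq_abs _
        _ ≤ gfun n := by
            refine Finset.sum_le_sum_of_subset_of_nonneg (Finset.filter_subset _ _)
              fun d _ _ => by positivity
    have hc : (0 : ℝ) < (ε * L) ^ 2 := by positivity
    have h2 : (Bad.card : ℝ) * (ε * L) ^ 2 ≤ (ε * (tau n : ℝ)) * (ε * L) ^ 2 := by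
      calc (Bad.card : ℝ) * (ε * L) ^ 2 ≤ (tau n : ℝ) * (ε ^ 3 * L ^ 2) := h1.trans hg
        _ = (ε * (tau n : ℝ)) * (ε * L) ^ 2 := by ring
    exact le_of_mul_le_mul_right h2 hc
  have hsplit : (n.divisors.filter (fun d : ℕ => |Real.log d - L / 2| < ε * L)).card + Bad.card
      = tau n := by
    rw [hBadDef, tau]
    exact Finset.card_filter_add_card_filter_not
      (p := fun d : ℕ => |Real.log d - L / 2| < ε * L) (s := n.divisors)
  have : ((n.divisors.filter (fun d : ℕ => |Real.log d - L / 2| < ε * L)).card : ℝ)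
      = (tau n : ℝ) - (Bad.card : ℝ) := by
    have := hsplit
    push_cast [← this]
    ring
  have hgoal : ((Finset.filter (fun d : ℝ => |Real.log d - L / 2| < ε * L)
        (n.divisors >>= fun a : ℕ => pure ((a : ℝ)))).card : ℝ)
      = ((n.divisors.filter (fun d : ℕ => |Real.log d - L / 2| < ε * L)).card : ℝ) := by
    congr 1
    have him : (n.divisors >>= fun a : ℕ => pure ((a : ℝ)))
        = n.divisors.image (fun a : ℕ => (a : ℝ)) := by
      simp only [Finset.bind_def, Finset.pure_def, Finset.sup_singleton_apply]
    rw [him, Finset.filter_image, Finset.card_image_of_injective _ Nat.cast_injective]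
  rw [hgoal, this]
  linarith
end
end
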